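/- Let n : ℕ, β : ℝ with β > 0, and δ : ℝ with 0 < δ ≤ 1/2; set n_δ := Real.log (1/δ) / β. Define γ : ℤ → ℝ by γ(ω) = 1/(1 + exp(-β·ω)) and the truncation γ̃(ω) := if (ω:ℝ) > n_δ then 1, else if (ω:ℝ) < -n_δ then 0, else γ(ω). For g ∈ [0,1] let R(g) : Matrix (Fin 2) (Fin 2) ℝ := !![√g, -√(1-g); √(1-g), √g]. Let W and W_δ be the block-diagonal matrices over the index (Fin 2) × (Fin (2n+1)) given by W ((a,k),(b,k')) = if k = k' then (R(γ((k:ℤ)-n))) a b else 0, and W_δ defined identically with γ̃ in place of γ. Then the ℓ²-operator norm satisfies ‖W - W_δ‖ ≤ 8·n·√δ. That is, truncating the Boltzmann-weight filter outside the frequency window [-n_δ, n_δ] incurs error at most 8n√δ. -/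

import Mathlib

open Matrix
open scoped Matrix.Norms.L2Operator Classical

private lemma sqrt_sub_sqrt_le {x y : ℝ} (hy : 0 ≤ y) (h : y ≤ x) :
    Real.sqrt x - Real.sqrt y ≤ Real.sqrt (x - y) := by
  have h1 : x ≤ (Real.sqrt (x - y) + Real.sqrt y) ^ 2 := by
    nlinarith [Real.sq_sqrt (sub_nonneg.2 h), Real.sq_sqrt hy, Real.sqrt_nonneg (x - y),
      Real.sqrt_nonneg y]
  have := (Real.sqrt_le_sqrt h1).trans_eq (Real.sqrt_sq (by positivity))
  linarith

private lemma abs_sqrt_sub_sqrt (x y : ℝ) (hx : 0 ≤ x) (hy : 0 ≤ y) :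
    |Real.sqrt x - Real.sqrt y| ≤ Real.sqrt |x - y| := by
  rcases le_total y x with h | h
  · rw [abs_of_nonneg (sub_nonneg.2 (Real.sqrt_le_sqrt h)), abs_of_nonneg (sub_nonneg.2 h)]
    exact sqrt_sub_sqrt_le hy h
  · rw [abs_sub_comm, abs_sub_comm x y,
      abs_of_nonneg (sub_nonneg.2 (Real.sqrt_le_sqrt h)), abs_of_nonneg (sub_nonneg.2 h)]
    exact sqrt_sub_sqrt_le hx h

private lemma l2_opNorm_le_sqrt_sum_sq {m n : Type*} [Fintype m] [Fintype n] [DecidableEq n]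
    (A : Matrix m n ℝ) :
    ‖A‖ ≤ Real.sqrt (∑ i, ∑ j, (A i j) ^ 2) := by
  rw [Matrix.l2_opNorm_def]
  refine ContinuousLinearMap.opNorm_le_bound _ (Real.sqrt_nonneg _) fun x => ?_
  have h1 : ‖(LinearEquiv.trans Matrix.toEuclideanLin LinearMap.toContinuousLinearMap) A x‖
      = Real.sqrt (∑ i, (∑ j, A i j * x j) ^ 2) := by
    rw [EuclideanSpace.norm_eq]
    simp only [Real.norm_eq_abs, sq_abs]
    rfl
  have h2 : ‖x‖ = Real.sqrt (∑ j, (x j) ^ 2) := by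
    rw [EuclideanSpace.norm_eq]
    simp only [Real.norm_eq_abs, sq_abs]
  rw [h1, h2, ← Real.sqrt_mul (by positivity)]
  apply Real.sqrt_le_sqrt
  rw [Finset.sum_mul]
  exact Finset.sum_le_sum fun i _ => Finset.sum_mul_sq_le_sq_mul_sq _ _ _

private lemma Rdiff_entry_bound {δ g h : ℝ} (hg0 : 0 ≤ g) (hg1 : g ≤ 1)
    (hh0 : 0 ≤ h) (hh1 : h ≤ 1) (hgh : |g - h| ≤ δ) (a b : Fin 2) :
    |(!![Real.sqrt g, -Real.sqrt (1 - g); Real.sqrt (1 - g), Real.sqrt g]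
        : Matrix (Fin 2) (Fin 2) ℝ) a b
      - !![Real.sqrt h, -Real.sqrt (1 - h); Real.sqrt (1 - h), Real.sqrt h] a b|
      ≤ Real.sqrt δ := by
  have key1 : |Real.sqrt g - Real.sqrt h| ≤ Real.sqrt δ :=
    (abs_sqrt_sub_sqrt g h hg0 hh0).trans (Real.sqrt_le_sqrt hgh)
  have key2 : |Real.sqrt (1 - g) - Real.sqrt (1 - h)| ≤ Real.sqrt δ := by
    refine (abs_sqrt_sub_sqrt (1 - g) (1 - h) (by linarith) (by linarith)).trans
      (Real.sqrt_le_sqrt ?_)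
    rw [show (1 - g) - (1 - h) = -(g - h) by ring, abs_neg]
    exact hgh
  fin_cases a <;> fin_cases b <;>
      simp [Matrix.cons_val_zero, Matrix.cons_val_one, Matrix.head_cons] <;>
    first
      | exact key1
      | exact key2
      | (rw [neg_add_eq_sub, abs_sub_comm]; exact key2)

theorem boltzmann_filter_truncation_error (n : ℕ) (β : ℝ) (hβ : 0 < β)
    (δ : ℝ) (hδ0 : 0 < δ) (hδ : δ ≤ 1 / 2)
    (nδ : ℝ) (hnδ : nδ = Real.log (1 / δ) / β)
    (γ : ℤ → ℝ) (hγ : ∀ ω : ℤ, γ ω = 1 / (1 + Real.exp (-β * ω)))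
    (γt : ℤ → ℝ)
    (hγt : ∀ ω : ℤ, γt ω =
      if (ω : ℝ) > nδ then 1 else if (ω : ℝ) < -nδ then 0 else γ ω)
    (R : ℝ → Matrix (Fin 2) (Fin 2) ℝ)
    (hR : ∀ g : ℝ, R g = !![Real.sqrt g, -Real.sqrt (1 - g);
                            Real.sqrt (1 - g), Real.sqrt g])
    (W Wδ : Matrix ((Fin 2) × (Fin (2 * n + 1))) ((Fin 2) × (Fin (2 * n + 1))) ℝ)
    (hW : W = Matrix.of fun a b : (Fin 2) × (Fin (2 * n + 1)) =>
      if a.2 = b.2 then R (γ ((a.2 : ℤ) - n)) a.1 b.1 else 0)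
    (hWδ : Wδ = Matrix.of fun a b : (Fin 2) × (Fin (2 * n + 1)) =>
      if a.2 = b.2 then R (γt ((a.2 : ℤ) - n)) a.1 b.1 else 0) :
    ‖W - Wδ‖ ≤ 8 * n * Real.sqrt δ := by
  -- basic facts about γ
  have hexp : ∀ ω : ℤ, (0:ℝ) < Real.exp (-β * ω) := fun ω => Real.exp_pos _
  have hγ0 : ∀ ω : ℤ, 0 ≤ γ ω := fun ω => by
    rw [hγ]; positivity
  have hγ1 : ∀ ω : ℤ, γ ω ≤ 1 := fun ω => by
    rw [hγ]
    rw [div_le_one (by positivity)]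
    linarith [hexp ω]
  -- nδ is nonnegative
  have hδ1 : (1:ℝ) ≤ 1 / δ := by rw [le_div_iff₀ hδ0]; linarith
  have hnδ0 : 0 ≤ nδ := by
    rw [hnδ]; exact div_nonneg (Real.log_nonneg hδ1) hβ.le
  -- tail bounds
  have hup : ∀ ω : ℤ, (ω : ℝ) > nδ → 1 - γ ω ≤ δ := by
    intro ω hω
    have hlog : Real.log (1 / δ) < β * ω := by
      have h2 : Real.log (1 / δ) / β < (ω : ℝ) := by rw [hnδ] at hω; exact hω
      have := (div_lt_iff₀ hβ).mp h2
      linarith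
    have he : Real.exp (-β * ω) ≤ δ := by
      have h2 : -β * ω ≤ Real.log δ := by
        rw [one_div, Real.log_inv] at hlog; linarith
      calc Real.exp (-β * ω) ≤ Real.exp (Real.log δ) := Real.exp_le_exp.mpr h2
        _ = δ := Real.exp_log hδ0
    rw [hγ]
    set u := Real.exp (-β * ω) with hu
    have hu0 : 0 < u := hexp ω
    have h3 : (1 / (1 + u)) * (1 + u) = 1 := by field_simp
    nlinarith [h3, he, hu0, div_nonneg (zero_le_one) (by linarith : (0:ℝ) ≤ 1 + u)]
  have hdown : ∀ ω : ℤ, (ω : ℝ) < -nδ → γ ω ≤ δ := by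
    intro ω hω
    have hlog : β * ω < -Real.log (1 / δ) := by
      have h2 : Real.log (1 / δ) / β < -(ω : ℝ) := by rw [hnδ] at hω; linarith
      have := (div_lt_iff₀ hβ).mp h2
      nlinarith
    have he : Real.exp (β * ω) ≤ δ := by
      have h2 : β * ω ≤ Real.log δ := by
        rw [one_div, Real.log_inv] at hlog; linarith
      calc Real.exp (β * ω) ≤ Real.exp (Real.log δ) := Real.exp_le_exp.mpr h2
        _ = δ := Real.exp_log hδ0
    rw [hγ]
    set u := Real.exp (-β * ω) with hu
    have hu0 : 0 < u := hexp ω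
    have hmul : Real.exp (β * ω) * u = 1 := by
      rw [hu, ← Real.exp_add]; ring_nf; exact Real.exp_zero
    have h1u : 1 ≤ δ * u := by nlinarith [Real.exp_pos (β * ω)]
    rw [div_le_iff₀ (by positivity)]
    nlinarith
  -- entrywise bound on the difference of rotation blocks
  have entry : ∀ (ω : ℤ) (a b : Fin 2),
      |R (γ ω) a b - R (γt ω) a b| ≤ Real.sqrt δ := by
    intro ω a b
    rw [hR, hR, hγt]
    split_ifs with h1 h2
    · -- γt = 1
      refine Rdiff_entry_bound (hγ0 ω) (hγ1 ω) zero_le_one le_rfl ?_ a b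
      rw [abs_sub_comm, abs_of_nonneg (by linarith [hγ1 ω])]
      exact hup ω h1
    · -- γt = 0
      refine Rdiff_entry_bound (hγ0 ω) (hγ1 ω) le_rfl zero_le_one ?_ a b
      rw [sub_zero, abs_of_nonneg (hγ0 ω)]
      exact hdown ω h2
    · refine Rdiff_entry_bound (hγ0 ω) (hγ1 ω) (hγ0 ω) (hγ1 ω) ?_ a b
      simp [hδ0.le]
  -- the per-block difference
  set d : Fin (2 * n + 1) → Fin 2 → Fin 2 → ℝ :=
    fun k a b => R (γ ((k : ℤ) - n)) a b - R (γt ((k : ℤ) - n)) a b with hd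
  have dsq : ∀ k a b, (d k a b) ^ 2 ≤ δ := by
    intro k a b
    have h := entry ((k : ℤ) - n) a b
    have : (d k a b) ^ 2 = |d k a b| ^ 2 := (sq_abs _).symm
    rw [this]
    calc |d k a b| ^ 2 ≤ (Real.sqrt δ) ^ 2 :=
          pow_le_pow_left₀ (abs_nonneg _) h 2
      _ = δ := Real.sq_sqrt hδ0.le
  -- the unnoticed block: k = n (ω = 0)
  have k0lt : n < 2 * n + 1 := by omega
  set k₀ : Fin (2 * n + 1) := ⟨n, k0lt⟩ with hk₀
  have dzero : ∀ a b, d k₀ a b = 0 := by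
    intro a b
    have hω : ((k₀ : ℤ) - n) = 0 := by simp [hk₀]
    have : γt 0 = γ 0 := by
      rw [hγt]
      have : ¬ ((0:ℤ):ℝ) > nδ := by push_neg; simpa using hnδ0
      rw [if_neg this, if_neg (by push_neg; simpa [neg_nonpos] using hnδ0)]
    simp [hd, hω, this]
  -- block sums
  have blocksum : ∀ k, ∑ a : Fin 2, ∑ b : Fin 2, (d k a b) ^ 2 ≤ 4 * δ := by
    intro k
    calc ∑ a : Fin 2, ∑ b : Fin 2, (d k a b) ^ 2
        ≤ ∑ _a : Fin 2, ∑ _b : Fin 2, δ :=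
          Finset.sum_le_sum fun a _ => Finset.sum_le_sum fun b _ => dsq k a b
      _ = 4 * δ := by
          simp only [Finset.sum_const, Finset.card_univ, Fintype.card_fin, smul_eq_mul,
            Nat.cast_ofNat]
          ring
  -- total Frobenius sum
  have key : ∑ p, ∑ q, ((W - Wδ) p q) ^ 2
      = ∑ k, ∑ a : Fin 2, ∑ b : Fin 2, (d k a b) ^ 2 := by
    rw [Fintype.sum_prod_type, Finset.sum_comm]
    refine Finset.sum_congr rfl fun k _ => Finset.sum_congr rfl fun a _ => ?_
    rw [Fintype.sum_prod_type]
    have hentry : ∀ (b : Fin 2) (k' : Fin (2 * n + 1)),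
        ((W - Wδ) (a, k) (b, k')) ^ 2 = if k = k' then (d k a b) ^ 2 else 0 := by
      intro b k'
      rw [hW, hWδ]
      by_cases h : k = k' <;> simp [h, hd]
    simp only [hentry]
    refine Finset.sum_congr rfl fun b _ => ?_
    simp [Finset.sum_ite_eq]
  have total : ∑ p, ∑ q, ((W - Wδ) p q) ^ 2 ≤ 2 * n * (4 * δ) := by
    rw [key, ← Finset.sum_erase_add _ _ (Finset.mem_univ k₀)]
    have h1 : ∑ a : Fin 2, ∑ b : Fin 2, (d k₀ a b) ^ 2 = 0 := by
      simp [dzero]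
    rw [h1, add_zero]
    calc ∑ k ∈ Finset.univ.erase k₀, ∑ a : Fin 2, ∑ b : Fin 2, (d k a b) ^ 2
        ≤ (Finset.univ.erase k₀).card • (4 * δ) :=
          Finset.sum_le_card_nsmul _ _ _ fun k _ => blocksum k
      _ = 2 * n * (4 * δ) := by
          rw [Finset.card_erase_of_mem (Finset.mem_univ _), Finset.card_univ]
          have hc : Fintype.card (Fin (2 * n + 1)) - 1 = 2 * n := by simp
          rw [hc, nsmul_eq_mul]
          push_cast
          ring
  -- conclude
  calc ‖W - Wδ‖ ≤ Real.sqrt (∑ p, ∑ q, ((W - Wδ) p q) ^ 2) :=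
        l2_opNorm_le_sqrt_sum_sq _
    _ ≤ Real.sqrt (2 * n * (4 * δ)) := Real.sqrt_le_sqrt total
    _ = Real.sqrt (8 * n) * Real.sqrt δ := by
        rw [← Real.sqrt_mul (by positivity)]
        ring_nf
    _ ≤ 8 * n * Real.sqrt δ := by
        refine mul_le_mul_of_nonneg_right ?_ (Real.sqrt_nonneg _)
        rcases Nat.eq_zero_or_pos n with hn | hn
        · simp [hn]
        · have hn1 : (1:ℝ) ≤ n := by exact_mod_cast hn
          have : Real.sqrt (8 * n) ≤ Real.sqrt ((8 * n) ^ 2) :=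
            Real.sqrt_le_sqrt (by nlinarith)
          rwa [Real.sqrt_sq (by positivity)] at this
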